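/- Let A ∈ ℝ^{n×n} be symmetric positive definite with largest eigenvalue λ_max, let γ ∈ [0,1), and let ‖v‖_A = √⟨v, Av⟩. Let X ∈ ℝⁿ, let C : ℝⁿ → ℝⁿ satisfy ‖X − C(Y)‖_A ≤ γ ‖X − Y‖_A for all Y, and let ε > 0 and T : ℝⁿ → ℝⁿ satisfy ‖Z − T(Z)‖ ≤ ε for all Z, where ‖·‖ is the Euclidean norm. Then for every X₀ ∈ ℝⁿ and every j ∈ ℕ, ‖X − (T∘C)^j(X₀)‖_A ≤ γ^j ‖X − X₀‖_A + ε √λ_max · Σ_{ℓ=0}^{j−1} γ^ℓ ≤ γ^j ‖X − X₀‖_A + ε √λ_max (1−γ)^{−1}. -/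

import Mathlib

open Matrix BigOperators

/-- the accumulated error bound for `j` perturbed iteration
steps from the proof of Lemma 4: `C` contracts toward `X` in the `A`-norm with
rate `γ ∈ [0,1)` and `T` perturbs each iterate by at most `ε` in the Euclidean
norm. -/
theorem perturbed_iteration_error_bound
    {n : ℕ}
    (A : Matrix (Fin n) (Fin n) ℝ) (hA : A.PosDef)
    (lmax : ℝ)
    (hmax : IsGreatest (Set.range hA.isHermitian.eigenvalues) lmax)
    (γ : ℝ) (hγ0 : 0 ≤ γ) (hγ1 : γ < 1)
    (normA : (Fin n → ℝ) → ℝ)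
    (hnormA : ∀ v, normA v = Real.sqrt (v ⬝ᵥ A.mulVec v))
    (norm2 : (Fin n → ℝ) → ℝ)
    (hnorm2 : ∀ v, norm2 v = Real.sqrt (v ⬝ᵥ v))
    (X : Fin n → ℝ) (C : (Fin n → ℝ) → (Fin n → ℝ))
    (hC : ∀ Y, normA (X - C Y) ≤ γ * normA (X - Y))
    (ε : ℝ) (hε : 0 < ε) (T : (Fin n → ℝ) → (Fin n → ℝ))
    (hT : ∀ Z, norm2 (Z - T Z) ≤ ε) :
    ∀ (X₀ : Fin n → ℝ) (j : ℕ),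
      normA (X - (T ∘ C)^[j] X₀) ≤
          γ ^ j * normA (X - X₀) +
            ε * Real.sqrt lmax * ∑ ℓ ∈ Finset.range j, γ ^ ℓ ∧
        γ ^ j * normA (X - X₀) +
            ε * Real.sqrt lmax * ∑ ℓ ∈ Finset.range j, γ ^ ℓ ≤
          γ ^ j * normA (X - X₀) + ε * Real.sqrt lmax * (1 - γ)⁻¹ := by
  classical
  -- lmax is nonnegative
  obtain ⟨i, hi⟩ := hmax.1
  have hlm : 0 ≤ lmax := hi ▸ hA.posSemidef.eigenvalues_nonneg i
  -- the matrix lmax • 1 - A is positive semidefinite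
  have hM : (lmax • (1 : Matrix (Fin n) (Fin n) ℝ) - A).PosSemidef := by
    have hspec := hA.isHermitian.spectral_theorem
    simp only [Unitary.conjStarAlgAut_apply, Unitary.coe_star] at hspec
    set U : Matrix (Fin n) (Fin n) ℝ := (hA.isHermitian.eigenvectorUnitary : Matrix (Fin n) (Fin n) ℝ) with hU
    have hUU : U * star U = 1 := mem_unitaryGroup_iff.mp hA.isHermitian.eigenvectorUnitary.2
    have h1 : lmax • (1 : Matrix (Fin n) (Fin n) ℝ) - A
        = U * diagonal (fun i => lmax - hA.isHermitian.eigenvalues i) * (star U) := by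
      have hdiag : diagonal (fun i => lmax - hA.isHermitian.eigenvalues i)
          = lmax • (1 : Matrix (Fin n) (Fin n) ℝ)
            - diagonal (RCLike.ofReal ∘ hA.isHermitian.eigenvalues) := by
        rw [← diagonal_sub]
        congr 1
        funext k
        simp [Matrix.smul_eq_diagonal_mul]
      rw [hdiag, Matrix.mul_sub, Matrix.sub_mul, Matrix.mul_smul, mul_one,
        Matrix.smul_mul, hUU, ← hspec]
    rw [h1]
    exact (posSemidef_diagonal_iff.mpr fun k => sub_nonneg.mpr (hmax.2 ⟨k, rfl⟩)).mul_mul_conjTranspose_same U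
  -- quadratic-form bound by lmax
  have hbound : ∀ v : Fin n → ℝ, v ⬝ᵥ A *ᵥ v ≤ lmax * (v ⬝ᵥ v) := by
    intro v
    have h := hM.dotProduct_mulVec_nonneg v
    simp only [star_trivial, sub_mulVec, smul_mulVec, one_mulVec,
      dotProduct_sub, dotProduct_smul, smul_eq_mul, sub_nonneg] at h
    exact h
  -- normA ≤ sqrt lmax * norm2
  have hAle : ∀ v, normA v ≤ Real.sqrt lmax * norm2 v := by
    intro v
    rw [hnormA, hnorm2, ← Real.sqrt_mul hlm]
    exact Real.sqrt_le_sqrt (hbound v)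
  -- norm2 is the Euclidean norm
  have hnorm2' : ∀ v : Fin n → ℝ, norm2 v = ‖(WithLp.equiv 2 (Fin n → ℝ)).symm v‖ := by
    intro v
    rw [hnorm2, EuclideanSpace.norm_eq]
    congr 1
    simp [dotProduct, Real.norm_eq_abs, sq_abs, sq]
  have htri2 : ∀ a b : Fin n → ℝ, norm2 (a + b) ≤ norm2 a + norm2 b := by
    intro a b
    simp only [hnorm2', WithLp.equiv_symm_apply, WithLp.toLp_add]
    exact norm_add_le _ _
  -- normA v = norm2 (S *ᵥ v) for S the psd square root
  open scoped MatrixOrder in set S := CFC.sqrt A with hS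
  have hSsymm : Sᵀ = S := by
    open scoped MatrixOrder in have := (CFC.sqrt_nonneg A).posSemidef.isHermitian
    rwa [Matrix.IsHermitian, conjTranspose_eq_transpose_of_trivial] at this
  have hnAS : ∀ v, normA v = norm2 (S *ᵥ v) := by
    intro v
    rw [hnormA, hnorm2]
    congr 1
    open scoped MatrixOrder in conv_lhs => rw [← CFC.sqrt_mul_sqrt_self A hA.posSemidef.nonneg]
    rw [← mulVec_mulVec, dotProduct_mulVec, ← mulVec_transpose, hSsymm]
  have htriA : ∀ a b : Fin n → ℝ, normA (a + b) ≤ normA a + normA b := by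
    intro a b
    rw [hnAS, hnAS, hnAS, mulVec_add]
    exact htri2 _ _
  -- normA is nonneg (not needed?) and one-step bound
  have hstep : ∀ Z, normA (X - T (C Z)) ≤ γ * normA (X - Z) + ε * Real.sqrt lmax := by
    intro Z
    have h1 : X - T (C Z) = (X - C Z) + (C Z - T (C Z)) := by abel
    rw [h1]
    refine (htriA _ _).trans (add_le_add (hC Z) ?_)
    calc normA (C Z - T (C Z)) ≤ Real.sqrt lmax * norm2 (C Z - T (C Z)) := hAle _
      _ ≤ Real.sqrt lmax * ε :=
          mul_le_mul_of_nonneg_left (hT (C Z)) (Real.sqrt_nonneg lmax)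
      _ = ε * Real.sqrt lmax := mul_comm _ _
  -- geometric sum bound
  have hgeom : ∀ j : ℕ, (∑ ℓ ∈ Finset.range j, γ ^ ℓ) ≤ (1 - γ)⁻¹ := by
    intro j
    have h1 : (∑ ℓ ∈ Finset.range j, γ ^ ℓ) * (γ - 1) = γ ^ j - 1 := geom_sum_mul γ j
    have h2 : 0 < 1 - γ := by linarith
    rw [inv_eq_one_div, le_div_iff₀ h2]
    nlinarith [geom_sum_mul γ j, pow_nonneg hγ0 j]
  intro X₀ j
  have hεs : 0 ≤ ε * Real.sqrt lmax := mul_nonneg hε.le (Real.sqrt_nonneg _)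
  constructor
  · induction j with
    | zero => simp
    | succ k ih =>
      rw [Function.iterate_succ_apply']
      have h1 := hstep ((T ∘ C)^[k] X₀)
      have h2 : γ * normA (X - (T ∘ C)^[k] X₀) ≤
          γ * (γ ^ k * normA (X - X₀) + ε * Real.sqrt lmax * ∑ ℓ ∈ Finset.range k, γ ^ ℓ) :=
        mul_le_mul_of_nonneg_left ih hγ0
      have h3 : (T ∘ C) ((T ∘ C)^[k] X₀) = T (C ((T ∘ C)^[k] X₀)) := rfl
      rw [h3]
      rw [geom_sum_succ]
      calc normA (X - T (C ((T ∘ C)^[k] X₀)))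
          ≤ γ * normA (X - (T ∘ C)^[k] X₀) + ε * Real.sqrt lmax := h1
        _ ≤ γ * (γ ^ k * normA (X - X₀) + ε * Real.sqrt lmax * ∑ ℓ ∈ Finset.range k, γ ^ ℓ)
              + ε * Real.sqrt lmax := by linarith
        _ = γ ^ (k + 1) * normA (X - X₀)
              + ε * Real.sqrt lmax * (γ * ∑ ℓ ∈ Finset.range k, γ ^ ℓ + 1) := by ring
  · have := mul_le_mul_of_nonneg_left (hgeom j) hεs
    linarith
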